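/- Let m ≥ 2 and let u_n denote the sequence of palindromic prefixes of the infinite m-bonacci word, with u_1 = ε, ordered by increasing length. Then for all n ≥ 2, u_n = φ_m(u_{n-1})·0. -/

import Mathlib

/-- The `m`-bonacci morphism on letters: `i ↦ 0(i+1)` for `i ≤ m-2`, `(m-1) ↦ 0`. -/
def phi (m a : ℕ) : List ℕ := if a = m - 1 then [0] else [0, a + 1]

/-- The `m`-bonacci morphism on words. -/
def phiW (m : ℕ) (w : List ℕ) : List ℕ := w.flatMap (phi m)

/-- The finite `m`-bonacci words `h_n = φ_m^n(0)`. -/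
def hb (m : ℕ) : ℕ → List ℕ
  | 0 => [0]
  | n+1 => phiW m (hb m n)

/-- The palindromic prefixes of the `m`-bonacci word, shifted:
`ub m n` is the paper's `u_{n+1}` (so `ub m 0 = u₁ = ε`, and `u_{n+2} = h_n u_{n+1}`). -/
def ub (m : ℕ) : ℕ → List ℕ
  | 0 => []
  | n+1 => hb m n ++ ub m n

/-- Number of occurrences of `x` as a factor of `w` (counted by starting position). -/
def occ (x w : List ℕ) : ℕ :=
  ((List.range (w.length + 1)).filter (fun i => x.isPrefixOf (w.drop i))).length

/-- A word is closed if it is a single letter or has a border (a proper factor that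
is both a prefix and a suffix) occurring exactly twice in it. -/
def ClosedWord (w : List ℕ) : Prop :=
  w.length = 1 ∨
    ∃ x : List ℕ, x ≠ [] ∧ x.length < w.length ∧ x <+: w ∧ x <:+ w ∧ occ x w = 2

/-- for `m ≥ 2` and `n ≥ 2`, the palindromic prefixes of the `m`-bonacci
word satisfy `u_n = φ_m(u_{n-1})·0` (here `ub m k` is the paper's `u_{k+1}`). -/

lemma phiW_append (m : ℕ) (a b : List ℕ) :
    phiW m (a ++ b) = phiW m a ++ phiW m b := by
  simp [phiW]

lemma ub_succ (m : ℕ) : ∀ k : ℕ, ub m (k + 1) = phiW m (ub m k) ++ [0] := by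
  intro k
  induction k with
  | zero => simp [ub, hb, phiW]
  | succ k ih =>
    calc ub m (k + 2) = hb m (k + 1) ++ ub m (k + 1) := rfl
      _ = phiW m (hb m k) ++ (phiW m (ub m k) ++ [0]) := by rw [ih]; rfl
      _ = phiW m (hb m k ++ ub m k) ++ [0] := by rw [phiW_append, List.append_assoc]
      _ = phiW m (ub m (k + 1)) ++ [0] := rfl

theorem ub_phi :
    ∀ m : ℕ, 2 ≤ m → ∀ n : ℕ, 2 ≤ n →
      ub m (n - 1) = phiW m (ub m (n - 2)) ++ [0] := by
  intro m _ n hn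
  obtain ⟨k, rfl⟩ : ∃ k, n = k + 2 := ⟨n - 2, by omega⟩
  simpa using ub_succ m k
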